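/- With the setup of the Holevo-Helstrom strategy (σ₀ ≠ σ₁ density matrices, {E₀,E₁} the Holevo-Helstrom measurement, μ a distribution on X × {σ₀,σ₁}, ν the induced noisy distribution, g : X → {0,1}, h(x) = σ_{g(x)}, R_μ(h) = (‖σ₀−σ₁‖₁/2)·P_μ[h(x) ≠ ρ]), the risks satisfy R̃_ν(g) − max{tr[σ₀E₁], tr[σ₁E₀]} ≤ R_μ(h) ≤ R̃_ν(g) − min{tr[σ₀E₁], tr[σ₁E₀]}. -/

import Mathlib

open Matrix
open scoped Matrix ComplexOrder Classical

noncomputable def psqrt {ι : Type*} [Fintype ι] [DecidableEq ι] (A : Matrix ι ι ℂ) : Matrix ι ι ℂ :=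
  if h : A.PosSemidef then
    (h.1.eigenvectorUnitary : Matrix ι ι ℂ) *
      Matrix.diagonal (((↑) : ℝ → ℂ) ∘ Real.sqrt ∘ h.1.eigenvalues) *
      (star (h.1.eigenvectorUnitary : Matrix ι ι ℂ))
  else 0

noncomputable def traceNorm {ι : Type*} [Fintype ι] [DecidableEq ι] (A : Matrix ι ι ℂ) : ℝ :=
  (psqrt (Aᴴ * A)).trace.re

noncomputable def helstromProj {ι : Type*} [Fintype ι] [DecidableEq ι] (A : Matrix ι ι ℂ) : Matrix ι ι ℂ :=
  if h : A.IsHermitian then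
    (h.eigenvectorUnitary : Matrix ι ι ℂ) *
      Matrix.diagonal (fun i => if 0 ≤ h.eigenvalues i then (1:ℂ) else 0) *
      (star (h.eigenvectorUnitary : Matrix ι ι ℂ))
  else 0

section aux
variable {ι : Type*} [Fintype ι] [DecidableEq ι]

lemma conj_trace (U : Matrix ι ι ℂ) (hU : U ∈ Matrix.unitaryGroup ι ℂ)
    (d : ι → ℂ) : (U * diagonal d * star U).trace = ∑ i, d i := by
  rw [trace_mul_cycle, (mem_unitaryGroup_iff').mp hU, one_mul, trace_diagonal]

lemma conj_mul' (U : Matrix ι ι ℂ) (hU : U ∈ Matrix.unitaryGroup ι ℂ)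
    (d e : ι → ℂ) :
    (U * diagonal d * star U) * (U * diagonal e * star U)
      = U * diagonal (fun i => d i * e i) * star U := by
  have h1 : star U * U = 1 := (mem_unitaryGroup_iff').mp hU
  calc (U * diagonal d * star U) * (U * diagonal e * star U)
      = U * (diagonal d * (star U * U) * diagonal e) * star U := by
        simp only [mul_assoc]
    _ = U * diagonal (fun i => d i * e i) * star U := by
        rw [h1, mul_one, diagonal_mul_diagonal]

end aux
lemma spectral' {ι : Type*} [Fintype ι] [DecidableEq ι] (A : Matrix ι ι ℂ) (hA : A.IsHermitian) :
    A = (hA.eigenvectorUnitary : Matrix ι ι ℂ) * diagonal (RCLike.ofReal ∘ hA.eigenvalues) *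
      star (hA.eigenvectorUnitary : Matrix ι ι ℂ) := by
  conv_lhs => rw [hA.spectral_theorem]
  rfl
lemma trace_herm' {ι : Type*} [Fintype ι] [DecidableEq ι] (A : Matrix ι ι ℂ) (hA : A.IsHermitian) :
    A.trace = ∑ i, (hA.eigenvalues i : ℂ) := by
  rw [congrArg Matrix.trace (spectral' A hA), conj_trace _ (hA.eigenvectorUnitary).2]
  rfl

lemma traceNorm_herm {ι : Type*} [Fintype ι] [DecidableEq ι] (A : Matrix ι ι ℂ) (hA : A.IsHermitian) :
    traceNorm A = ∑ i, |hA.eigenvalues i| := by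
  set U : Matrix ι ι ℂ := (hA.eigenvectorUnitary : Matrix ι ι ℂ) with hU
  set S : Matrix ι ι ℂ := U * diagonal (fun i => ((|hA.eigenvalues i| : ℝ) : ℂ)) * star U with hS
  have hP : (Aᴴ * A).PosSemidef := posSemidef_conjTranspose_mul_self A
  have hd : (Matrix.diagonal fun i => ((|hA.eigenvalues i| : ℝ) : ℂ)).PosSemidef :=
    posSemidef_diagonal_iff.mpr fun i => Complex.zero_le_real.mpr (abs_nonneg _)
  have hSpsd : S.PosSemidef := by
    have := hd.mul_mul_conjTranspose_same U
    rwa [← star_eq_conjTranspose] at this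
  have hAA : A * A = (U * diagonal (RCLike.ofReal ∘ hA.eigenvalues) * star U) *
      (U * diagonal (RCLike.ofReal ∘ hA.eigenvalues) * star U) := by
    rw [← spectral' A hA]
  have hsq : S ^ 2 = Aᴴ * A := by
    rw [pow_two, hS, conj_mul' _ (hA.eigenvectorUnitary).2, hA.eq, hAA,
      conj_mul' _ (hA.eigenvectorUnitary).2]
    congr 1
    congr 1
    apply congrArg Matrix.diagonal
    funext i
    show ((|hA.eigenvalues i| : ℝ) : ℂ) * ((|hA.eigenvalues i| : ℝ) : ℂ)
        = ((hA.eigenvalues i : ℝ) : ℂ) * ((hA.eigenvalues i : ℝ) : ℂ)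
    rw [← Complex.ofReal_mul, ← Complex.ofReal_mul, abs_mul_abs_self]
  have hSeq : S = psqrt (Aᴴ * A) := by
    open scoped MatrixOrder in
    have e1 : CFC.sqrt (Aᴴ * A) = S :=
      CFC.sqrt_unique (by rw [← pow_two]; exact hsq) (Matrix.nonneg_iff_posSemidef.mpr hSpsd)
    open scoped MatrixOrder in
    rw [← e1, CFC.sqrt_eq_cfc, cfc_nnreal_eq_real _ (Aᴴ * A) (Matrix.nonneg_iff_posSemidef.mpr hP),
      hP.1.cfc_eq, psqrt, dif_pos hP, IsHermitian.cfc, Unitary.conjStarAlgAut_apply]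
    congr 3
    funext i
    simp [Real.coe_sqrt, Real.coe_toNNReal', hP.eigenvalues_nonneg i]
  rw [traceNorm, ← hSeq, hS, conj_trace _ (hA.eigenvectorUnitary).2]
  rw [← Complex.ofReal_sum, Complex.ofReal_re]
lemma trace_mul_helstrom {ι : Type*} [Fintype ι] [DecidableEq ι] (A : Matrix ι ι ℂ) (hA : A.IsHermitian) :
    (A * helstromProj A).trace
      = ∑ i, (if 0 ≤ hA.eigenvalues i then (hA.eigenvalues i : ℂ) else 0) := by
  rw [helstromProj, dif_pos hA]
  set U : Matrix ι ι ℂ := (hA.eigenvectorUnitary : Matrix ι ι ℂ) with hU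
  have hsp : A * (U * Matrix.diagonal (fun i => if 0 ≤ hA.eigenvalues i then (1:ℂ) else 0) * star U)
      = (U * diagonal (RCLike.ofReal ∘ hA.eigenvalues) * star U) *
        (U * Matrix.diagonal (fun i => if 0 ≤ hA.eigenvalues i then (1:ℂ) else 0) * star U) := by
    rw [← spectral' A hA]
  rw [hsp, conj_mul' _ (hA.eigenvectorUnitary).2, conj_trace _ (hA.eigenvectorUnitary).2]
  congr 1; ext i
  by_cases h : 0 ≤ hA.eigenvalues i <;> simp [h]
theorem stmt17 {n : ℕ} {X : Type*} [Fintype X]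
    (σ₀ σ₁ : Matrix (Fin n) (Fin n) ℂ)
    (h₀ : σ₀.PosSemidef) (h₁ : σ₁.PosSemidef)
    (t₀ : σ₀.trace = 1) (t₁ : σ₁.trace = 1) (hne : σ₀ ≠ σ₁)
    (E₀ E₁ : Matrix (Fin n) (Fin n) ℂ)
    (hE₀ : E₀ = helstromProj (σ₀ - σ₁)) (hE₁ : E₁ = 1 - E₀)
    (μ : X × Bool → ℝ) (hμ : ∀ p, 0 ≤ μ p) (hμ1 : ∑ p, μ p = 1)
    (g : X → Bool)
    (Rν Rμ : ℝ)
    (hRν : Rν = ∑ p : X × Bool, μ p *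
        (((if p.2 then σ₁ else σ₀) * (if g p.1 then E₀ else E₁)).trace).re)
    (hRμ : Rμ = (traceNorm (σ₀ - σ₁) / 2) *
        (∑ p : X × Bool, μ p * (if g p.1 ≠ p.2 then 1 else 0))) :
    Rν - max (((σ₀ * E₁).trace).re) (((σ₁ * E₀).trace).re) ≤ Rμ ∧
      Rμ ≤ Rν - min (((σ₀ * E₁).trace).re) (((σ₁ * E₀).trace).re) := by
  have hΔ : (σ₀ - σ₁).IsHermitian := h₀.1.sub h₁.1
  set a := ((σ₀ * E₁).trace).re with ha
  set b := ((σ₁ * E₀).trace).re with hb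
  set T := traceNorm (σ₀ - σ₁) / 2 with hT
  have trΔ : (σ₀ - σ₁).trace = 0 := by rw [trace_sub, t₀, t₁, sub_self]
  have sumev : ∑ i, hΔ.eigenvalues i = 0 := by
    have h1 := trace_herm' _ hΔ
    rw [trΔ] at h1
    have h2 := congrArg Complex.re h1.symm
    simpa [← Complex.ofReal_sum] using h2
  have tN : traceNorm (σ₀ - σ₁) = ∑ i, |hΔ.eigenvalues i| := traceNorm_herm _ hΔ
  have key : ((σ₀ - σ₁) * E₀).trace.re = T := by
    rw [hE₀, congrArg Complex.re (trace_mul_helstrom _ hΔ), hT, tN]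
    have : ∀ i, ((if 0 ≤ hΔ.eigenvalues i then ((hΔ.eigenvalues i : ℝ) : ℂ) else 0)).re
        = (|hΔ.eigenvalues i| + hΔ.eigenvalues i) / 2 := by
      intro i
      rcases le_or_gt 0 (hΔ.eigenvalues i) with h | h
      · rw [if_pos h, Complex.ofReal_re, abs_of_nonneg h]; ring
      · rw [if_neg (not_le.mpr h), Complex.zero_re, abs_of_neg h]; ring
    rw [Complex.re_sum]
    rw [Finset.sum_congr rfl (fun i _ => this i), Finset.sum_div, ← Finset.sum_div,
      Finset.sum_add_distrib, sumev, add_zero, Finset.sum_div]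
  have h00 : ((σ₀ * E₀).trace).re = 1 - a := by
    have hE₀' : E₀ = 1 - E₁ := by rw [hE₁, sub_sub_cancel]
    rw [hE₀', mul_sub, mul_one, trace_sub, t₀, Complex.sub_re, Complex.one_re, ha]
  have h11 : ((σ₁ * E₁).trace).re = 1 - b := by
    rw [hE₁, mul_sub, mul_one, trace_sub, t₁, Complex.sub_re, Complex.one_re]
  have hTab : T = 1 - a - b := by
    rw [← key, sub_mul, trace_sub, Complex.sub_re, h00]
  have hsum : Rν - Rμ = ∑ p : X × Bool, μ p * (if g p.1 then b else a) := by
    rw [hRν, hRμ, Finset.mul_sum, ← Finset.sum_sub_distrib]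
    apply Finset.sum_congr rfl
    intro p _
    rcases Bool.eq_false_or_eq_true (g p.1) with hg | hg <;>
      rcases Bool.eq_false_or_eq_true p.2 with hp | hp <;>
      simp only [hg, hp, if_true, if_false, Bool.true_eq_false, Bool.false_eq_true,
        ne_eq, not_true_eq_false, not_false_eq_true, ite_true, ite_false,
        Bool.false_ne_true, h00, h11, ← ha, ← hb, hTab] <;> ring
  have hminmax : min a b ≤ ∑ p : X × Bool, μ p * (if g p.1 then b else a) ∧
      (∑ p : X × Bool, μ p * (if g p.1 then b else a)) ≤ max a b := by
    constructor
    · calc min a b = ∑ p : X × Bool, μ p * min a b := by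
            rw [← Finset.sum_mul, hμ1, one_mul]
        _ ≤ _ := Finset.sum_le_sum fun p _ => mul_le_mul_of_nonneg_left
            (by rcases Bool.eq_false_or_eq_true (g p.1) with hg | hg <;>
                simp [hg, min_le_left, min_le_right]) (hμ p)
    · calc _ ≤ ∑ p : X × Bool, μ p * max a b := Finset.sum_le_sum fun p _ =>
            mul_le_mul_of_nonneg_left
            (by rcases Bool.eq_false_or_eq_true (g p.1) with hg | hg <;>
                simp [hg, le_max_left, le_max_right]) (hμ p)
        _ = max a b := by rw [← Finset.sum_mul, hμ1, one_mul]
  constructor <;> linarith [hminmax.1, hminmax.2]
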